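/- Let a, b be real numbers with a ≠ 0. Then in the algebra of 2×2 real matrices, exp(A) * exp(N) = exp(M), where A = ![![a,0],![0,0]], N = ![![0,b],![0,0]], and M = ![![a, a*b/(1 - exp(-a))],![0,0]]. (This is the matrix form of the κ-Minkowski reordering identity e^{-i q x} e^{i q₀ t} = exp(i q₀ t - i q x · λq₀/(1-e^{-λq₀})).) -/

import Mathlib

open Matrix NormedSpace

lemma sq_zero_exp (x : Matrix (Fin 2) (Fin 2) ℝ) (hx : x * x = 0) :
    NormedSpace.exp x = 1 + x := by
  rw [exp_eq_tsum (𝕂 := ℝ)]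
  show ∑' n : ℕ, ((n.factorial : ℝ)⁻¹) • x ^ n = 1 + x
  rw [tsum_eq_sum (s := Finset.range 2) ?_]
  · simp [Finset.sum_range_succ]
  · intro n hn
    have hn2 : 2 ≤ n := by simp at hn; omega
    have : x ^ n = 0 := by
      have : x ^ n = x ^ 2 * x ^ (n - 2) := by
        rw [← pow_add]; congr 1; omega
      rw [this, pow_two, hx, zero_mul]
    simp [this]

lemma expUT (a c : ℝ) (ha : a ≠ 0) :
    NormedSpace.exp (!![a, c; 0, 0] : Matrix (Fin 2) (Fin 2) ℝ) =
      !![Real.exp a, c * (Real.exp a - 1) / a; 0, 1] := by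
  have hval : (!![(1:ℝ), -c/a; 0, 1] : Matrix (Fin 2) (Fin 2) ℝ) * !![1, c/a; 0, 1] = 1 := by
    ext i j; fin_cases i <;> fin_cases j <;> simp [Matrix.mul_apply, Fin.sum_univ_succ, Matrix.one_apply] <;> ring
  have hval' : (!![(1:ℝ), c/a; 0, 1] : Matrix (Fin 2) (Fin 2) ℝ) * !![1, -c/a; 0, 1] = 1 := by
    ext i j; fin_cases i <;> fin_cases j <;> simp [Matrix.mul_apply, Fin.sum_univ_succ, Matrix.one_apply] <;> ring
  set U : (Matrix (Fin 2) (Fin 2) ℝ)ˣ := ⟨!![1, -c/a; 0, 1], !![1, c/a; 0, 1], hval, hval'⟩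
  have hdiag : (diagonal ![a, 0] : Matrix (Fin 2) (Fin 2) ℝ) = !![a, 0; 0, 0] := by
    ext i j; fin_cases i <;> fin_cases j <;> simp [diagonal]
  have hM : (!![a, c; 0, 0] : Matrix (Fin 2) (Fin 2) ℝ) =
      (U : Matrix (Fin 2) (Fin 2) ℝ) * diagonal ![a, 0] * (↑U⁻¹ : Matrix (Fin 2) (Fin 2) ℝ) := by
    show _ = !![(1:ℝ), -c/a; 0, 1] * diagonal ![a, 0] * !![1, c/a; 0, 1]
    rw [hdiag, Matrix.mul_fin_two, Matrix.mul_fin_two]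
    field_simp
    ext i j; fin_cases i <;> fin_cases j <;> simp <;> field_simp <;> ring
  rw [hM, Matrix.exp_units_conj, Matrix.exp_diagonal]
  have hexpdiag : (diagonal (NormedSpace.exp ![a, 0]) : Matrix (Fin 2) (Fin 2) ℝ) =
      !![Real.exp a, 0; 0, 1] := by
    ext i j
    fin_cases i <;> fin_cases j <;>
      simp [diagonal, Pi.exp_def, ← Real.exp_eq_exp_ℝ]
  rw [hexpdiag]
  show !![(1:ℝ), -c/a; 0, 1] * _ * !![1, c/a; 0, 1] = _
  rw [Matrix.mul_fin_two, Matrix.mul_fin_two]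
  ext i j; fin_cases i <;> fin_cases j <;> simp <;> field_simp <;> ring

theorem stmt0 (a b : ℝ) (ha : a ≠ 0) :
    NormedSpace.exp (!![a, 0; 0, 0] : Matrix (Fin 2) (Fin 2) ℝ) *
      NormedSpace.exp (!![0, b; 0, 0] : Matrix (Fin 2) (Fin 2) ℝ) =
    NormedSpace.exp
      (!![a, a * b / (1 - Real.exp (-a)); 0, 0] : Matrix (Fin 2) (Fin 2) ℝ) := by
  have hN : NormedSpace.exp (!![0, b; 0, 0] : Matrix (Fin 2) (Fin 2) ℝ) = !![1, b; 0, 1] := by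
    rw [sq_zero_exp _ (by ext i j; fin_cases i <;> fin_cases j <;> simp [Matrix.mul_apply, Fin.sum_univ_succ])]
    rw [Matrix.one_fin_two]; norm_num
  rw [hN, expUT a 0 ha, expUT a _ ha, Matrix.mul_fin_two]
  have h1 : Real.exp (-a) ≠ 1 := by
    intro h
    have : -a = 0 := Real.exp_eq_exp.mp (by simpa using h)
    exact ha (by linarith)
  have h1' : (1 : ℝ) - Real.exp (-a) ≠ 0 := sub_ne_zero.mpr (Ne.symm h1)
  have h2 : Real.exp a - 1 ≠ 0 := by
    intro h
    exact ha (Real.exp_eq_exp.mp (show Real.exp a = Real.exp 0 by rw [Real.exp_zero]; linarith))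
  have key : (Real.exp a - 1) * (a * b / (1 - Real.exp (-a))) / a = b * Real.exp a := by
    have hrw : 1 - Real.exp (-a) = (Real.exp a - 1) / Real.exp a := by
      rw [Real.exp_neg]; field_simp
    rw [hrw]
    field_simp
  norm_num [key, mul_comm]
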